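/- Let G₀ be a group and G = G₀ ⋊ ℤ a semidirect product where every element writes uniquely as g₀sⁿ with g₀ ∈ G₀, n ∈ ℤ. Suppose G acts on a set Ω containing disjoint subsets Z_s, Z_{s̄} preserved by G₀, a point p ∈ Ω \ (Z_s ∪ Z_{s̄}) with sⁿ(p) ∈ Z_s for all n > 0 and sⁿ(p) ∈ Z_{s̄} for all n < 0, and suppose the action of G₀ on Ω is faithful. Then the action of G on Ω is faithful. -/
import Mathlib


/-- Let `G = G₀ ⋊ ℤ` where every element writes uniquely as `g₀ * sⁿ` with `g₀ ∈ G₀`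
and `n ∈ ℤ`.  Suppose `G` acts on a set `Ω` containing disjoint subsets `Z, Z'`
preserved by `G₀`, and there is a point `p ∉ Z ∪ Z'` with `sⁿ(p) ∈ Z` for all `n > 0`
and `sⁿ(p) ∈ Z'` for all `n < 0`.  If the action of `G₀` on `Ω` is faithful, then the
action of `G` on `Ω` is faithful. -/
theorem faithful_of_semidirect_Z {G Ω : Type*} [Group G] [MulAction G Ω]
    (G₀ : Subgroup G) (s : G)
    (huniq : ∀ g : G, ∃! p : G₀ × ℤ, g = (p.1 : G) * s ^ p.2)
    (Z Z' : Set Ω) (hdisj : Disjoint Z Z')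
    (hG₀Z : ∀ g ∈ G₀, ∀ x ∈ Z, g • x ∈ Z)
    (hG₀Z' : ∀ g ∈ G₀, ∀ x ∈ Z', g • x ∈ Z')
    (p : Ω) (hp : p ∉ Z ∪ Z')
    (hpos : ∀ n : ℤ, 0 < n → s ^ n • p ∈ Z)
    (hneg : ∀ n : ℤ, n < 0 → s ^ n • p ∈ Z')
    (hfaith : ∀ g ∈ G₀, (∀ x : Ω, g • x = x) → g = 1) :
    ∀ g : G, (∀ x : Ω, g • x = x) → g = 1 := by
  intro g hg
  obtain ⟨⟨g₀, n⟩, hgn, -⟩ := huniq g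
  have hpe : (g₀ : G) • (s ^ n • p) = p := by
    have := hg p
    rw [hgn, mul_smul] at this
    exact this
  have hn : n = 0 := by
    rcases lt_trichotomy n 0 with h | h | h
    · exact absurd (Or.inr (hpe ▸ hG₀Z' g₀ g₀.2 _ (hneg n h))) hp
    · exact h
    · exact absurd (Or.inl (hpe ▸ hG₀Z g₀ g₀.2 _ (hpos n h))) hp
  subst hn
  rw [zpow_zero, mul_one] at hgn
  subst hgn
  exact hfaith g₀ g₀.2 hg
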